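/- Let A : X → Y be a bounded linear operator from a Banach space to a Hilbert space, R convex, and suppose x_α minimises (1/2)‖Ax − y‖² + αR(x) and x_α^δ minimises (1/2)‖Ax − y^δ‖² + αR(x), with subgradient ξ_α = −(1/α)A*(Ax_α − y) ∈ ∂R(x_α). Then the Bregman distance satisfies D_{ξ_α}(x_α^δ, x_α) ≤ (1/α)⟨Δy − Δp_α, Δp_α⟩, where Δy = y^δ − y, Δp_α = (y^δ − Ax_α^δ) − (y − Ax_α). -/

import Mathlib

open RealInnerProductSpace

/-- Bound on the data propagation error in the Bregman distance:
`D_{ξ_α}(x_α^δ, x_α) ≤ (1/α) ⟪Δy - Δp_α, Δp_α⟫` where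
`ξ_α = -(1/α) A*(A x_α - y) ∈ ∂R(x_α)`, `Δy = y^δ - y`, and
`Δp_α = (y^δ - A x_α^δ) - (y - A x_α)`. -/
theorem stmt_10 {X Y : Type*} [NormedAddCommGroup X] [NormedSpace ℝ X]
    [NormedAddCommGroup Y] [InnerProductSpace ℝ Y] [CompleteSpace Y]
    (A : X →L[ℝ] Y) (R : X → ℝ) (hR : ConvexOn ℝ Set.univ R)
    (α : ℝ) (hα : 0 < α) (y yδ : Y) (xα xαδ : X)
    (hmin : ∀ x : X, (1 / 2) * ‖A xα - y‖ ^ 2 + α * R xα ≤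
      (1 / 2) * ‖A x - y‖ ^ 2 + α * R x)
    (hminδ : ∀ x : X, (1 / 2) * ‖A xαδ - yδ‖ ^ 2 + α * R xαδ ≤
      (1 / 2) * ‖A x - yδ‖ ^ 2 + α * R x) :
    -- `D_{ξ_α}(x_α^δ, x_α) = R x_α^δ - R x_α - ⟨ξ_α, x_α^δ - x_α⟩` with
    -- `⟨ξ_α, u⟩ = -(1/α) ⟪A x_α - y, A u⟫`
    R xαδ - R xα + (1 / α) * ⟪A xα - y, A xαδ - A xα⟫ ≤
      (1 / α) * ⟪(yδ - y) - ((yδ - A xαδ) - (y - A xα)),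
        (yδ - A xαδ) - (y - A xα)⟫ := by
  set u : Y := A xαδ - A xα with hu
  set b : Y := A xαδ - yδ with hb
  set a : Y := A xα - y with ha
  -- variational inequality at xαδ
  have key : ∀ t : ℝ, 0 < t → t ≤ 1 →
      ⟪b, u⟫ + α * (R xαδ - R xα) ≤ t / 2 * ‖u‖ ^ 2 := by
    intro t ht ht1
    have hx := hminδ (xαδ + t • (xα - xαδ))
    have hA : A (xαδ + t • (xα - xαδ)) - yδ = b - t • u := by
      simp only [map_add, map_smul, map_sub, hb, hu]
      module
    have hconv : R (xαδ + t • (xα - xαδ)) ≤ (1 - t) * R xαδ + t * R xα := by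
      have h := hR.2 (Set.mem_univ xαδ) (Set.mem_univ xα)
        (by linarith : (0:ℝ) ≤ 1 - t) (le_of_lt ht) (by ring)
      have he : (1 - t) • xαδ + t • xα = xαδ + t • (xα - xαδ) := by module
      rwa [he] at h
    have hnorm : ‖b - t • u‖ ^ 2 = ‖b‖ ^ 2 - 2 * (t * ⟪b, u⟫) + t ^ 2 * ‖u‖ ^ 2 := by
      rw [norm_sub_sq_real, real_inner_smul_right, norm_smul, mul_pow]
      simp [abs_of_pos ht]
    rw [hA, hnorm] at hx
    have h3 : t * (⟪b, u⟫ + α * (R xαδ - R xα)) ≤ t * (t / 2 * ‖u‖ ^ 2) := by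
      nlinarith [hx, hconv]
    exact le_of_mul_le_mul_left h3 ht
  have hg : ⟪b, u⟫ + α * (R xαδ - R xα) ≤ 0 := by
    by_contra hpos
    push_neg at hpos
    set g : ℝ := ⟪b, u⟫ + α * (R xαδ - R xα) with hgdef
    have h1 := key 1 one_pos le_rfl
    have hu2 : 0 < ‖u‖ ^ 2 := by nlinarith
    have ht0 : 0 < g / ‖u‖ ^ 2 := div_pos hpos hu2
    have ht1 : g / ‖u‖ ^ 2 ≤ 1 := by
      rw [div_le_one hu2]; nlinarith
    have h2 := key (g / ‖u‖ ^ 2) ht0 ht1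
    have he : g / ‖u‖ ^ 2 / 2 * ‖u‖ ^ 2 = g / 2 := by
      have hn : ‖u‖ ≠ 0 := by intro h; rw [h] at hu2; norm_num at hu2
      field_simp
    rw [he] at h2
    linarith
  -- rewrite the RHS inner product
  have hI : ⟪(yδ - y) - ((yδ - A xαδ) - (y - A xα)),
      (yδ - A xαδ) - (y - A xα)⟫ = ⟪a, u⟫ - ⟪b, u⟫ := by
    have e1 : (yδ - y) - ((yδ - A xαδ) - (y - A xα)) = u := by
      rw [hu]; abel
    have e2 : (yδ - A xαδ) - (y - A xα) = a - b := by
      rw [ha, hb]; abel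
    rw [e1, e2, inner_sub_right, real_inner_comm u a, real_inner_comm u b]
  rw [hI]
  have h4 : (1 / α) * (⟪b, u⟫ + α * (R xαδ - R xα)) ≤ 0 :=
    mul_nonpos_of_nonneg_of_nonpos (by positivity) hg
  have h5 : (1 / α) * (⟪b, u⟫ + α * (R xαδ - R xα)) =
      (1 / α) * ⟪b, u⟫ + (R xαδ - R xα) := by
    field_simp
  rw [h5] at h4
  linarith
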